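/- Let T_1,…,T_k be row contractions on H with pairwise commuting maps Φ_i(X) = ∑_s T_{i,s} X T_{i,s}*, and suppose ∑_{i=1}^k ∑_s T_{i,s} T_{i,s}* ≤ 1. Then (id − Φ_1)∘⋯∘(id − Φ_k)(1) ≥ 1 − Φ_1(1) − ⋯ − Φ_k(1) ≥ 0. -/

import Mathlib

open ContinuousLinearMap

theorem stmt12 {H : Type*} [NormedAddCommGroup H] [InnerProductSpace ℂ H] [CompleteSpace H]
    (k : ℕ) (n : Fin k → ℕ) (T : (i : Fin k) → Fin (n i) → H →L[ℂ] H)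
    -- the maps Φ_i(X) = ∑_s T_{i,s} X T_{i,s}* pairwise commute
    (hcomm : ∀ (i j : Fin k) (X : H →L[ℂ] H),
      (∑ s, T i s * (∑ t, T j t * X * adjoint (T j t)) * adjoint (T i s)) =
      (∑ t, T j t * (∑ s, T i s * X * adjoint (T i s)) * adjoint (T j t)))
    -- ∑_i Φ_i(1) ≤ 1
    (hsum : ((1 : H →L[ℂ] H) - ∑ i, ∑ s, T i s * adjoint (T i s)).IsPositive)
    -- D j is (id - Φ_{j+1}) ∘ ⋯ ∘ (id - Φ_k) (1), computed iteratively: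
    (D : ℕ → H →L[ℂ] H) (hD0 : D 0 = 1)
    (hDsucc : ∀ j : Fin k, D (j + 1) = D j - ∑ s, T j s * D j * adjoint (T j s)) :
    (D k - ((1 : H →L[ℂ] H) - ∑ i, ∑ s, T i s * adjoint (T i s))).IsPositive ∧
    (D k).IsPositive := by
  classical
  set Φ : Fin k → (H →L[ℂ] H) := fun i => ∑ s, T i s * adjoint (T i s) with hΦ
  have hpos : ∀ (i : Fin k) (X : H →L[ℂ] H), X.IsPositive →
      (∑ s, T i s * X * adjoint (T i s)).IsPositive := by
    intro i X hX
    refine Finset.sum_induction _ (fun A : H →L[ℂ] H => A.IsPositive)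
      (fun a b ha hb => ha.add hb) isPositive_zero (fun s _ => ?_)
    have h := hX.conj_adjoint (T i s)
    rwa [show T i s ∘L X ∘L adjoint (T i s) = T i s * X * adjoint (T i s) from mul_assoc _ _ _ |>.symm] at h
  set S : ℕ → (H →L[ℂ] H) :=
    fun m => ∑ i ∈ Finset.univ.filter (fun i : Fin k => (i : ℕ) < m), Φ i with hS
  have hSk : S k = ∑ i, Φ i := by
    apply Finset.sum_congr _ (fun _ _ => rfl)
    simp [Finset.filter_true_of_mem, Fin.is_lt]
  have hSdiff : ∀ m, ((1 : H →L[ℂ] H) - S m).IsPositive := by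
    intro m
    have h1 : (S k - S m).IsPositive := by
      have : S k - S m = ∑ i ∈ Finset.univ \ Finset.univ.filter (fun i : Fin k => (i : ℕ) < m), Φ i := by
        rw [hSk, ← Finset.sum_sdiff (Finset.filter_subset (fun i : Fin k => (i : ℕ) < m)
          Finset.univ) (f := Φ)]
        exact add_sub_cancel_right _ _
      rw [this]
      exact Finset.sum_induction _ (fun A : H →L[ℂ] H => A.IsPositive)
        (fun a b ha hb => ha.add hb) isPositive_zero (fun i _ => hpos i 1 isPositive_one)
    have : (1 : H →L[ℂ] H) - S m = (1 - S k) + (S k - S m) := by abel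
    rw [this]
    exact (hSk ▸ hsum).add h1
  have key : ∀ m, m ≤ k → (D m - (1 - S m)).IsPositive ∧ ((1 : H →L[ℂ] H) - D m).IsPositive := by
    intro m
    induction m with
    | zero =>
      intro _
      have hS0 : S 0 = 0 := by simp [hS]
      constructor
      · simpa [hD0, hS0] using isPositive_zero
      · simpa [hD0] using isPositive_zero
    | succ m ih =>
      intro hm
      have hmk : m < k := hm
      obtain ⟨ih1, ih2⟩ := ih (le_of_lt hmk)
      set j : Fin k := ⟨m, hmk⟩ with hj
      have hDm : (D m).IsPositive := by
        have : D m = (D m - (1 - S m)) + (1 - S m) := by abel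
        rw [this]
        exact ih1.add (hSdiff m)
      have hSstep : S (m + 1) = S m + Φ j := by
        have hins : Finset.univ.filter (fun i : Fin k => (i : ℕ) < m + 1)
            = insert j (Finset.univ.filter (fun i : Fin k => (i : ℕ) < m)) := by
          ext i
          simp only [Finset.mem_filter, Finset.mem_univ, true_and, Finset.mem_insert]
          rw [Nat.lt_succ_iff_lt_or_eq]
          constructor
          · rintro (h | h)
            · exact Or.inr h
            · exact Or.inl (Fin.ext h)
          · rintro (h | h)
            · exact Or.inr (by rw [h])
            · exact Or.inl h
        simp only [hS]
        rw [hins, Finset.sum_insert (by simp [hj])]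
        abel
      have hstep := hDsucc j
      have hjm : (j : ℕ) = m := rfl
      rw [hjm] at hstep
      have hΦD : (∑ s, T j s * D m * adjoint (T j s)).IsPositive := hpos j _ hDm
      constructor
      · have e1 : D (m + 1) - (1 - S (m + 1))
            = (D m - (1 - S m)) + ∑ s, T j s * (1 - D m) * adjoint (T j s) := by
          have e2 : (∑ s, T j s * ((1 : H →L[ℂ] H) - D m) * adjoint (T j s))
              = Φ j - ∑ s, T j s * D m * adjoint (T j s) := by
            rw [hΦ, ← Finset.sum_sub_distrib]
            apply Finset.sum_congr rfl
            intro s _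
            simp [sub_mul, mul_sub]
          rw [e2, hstep, hSstep]
          abel
        rw [e1]
        exact ih1.add (hpos j _ ih2)
      · have e3 : (1 : H →L[ℂ] H) - D (m + 1)
            = (1 - D m) + ∑ s, T j s * D m * adjoint (T j s) := by
          rw [hstep]; abel
        rw [e3]
        exact ih2.add hΦD
  obtain ⟨h1, h2⟩ := key k le_rfl
  refine ⟨by simpa [hSk, hΦ] using h1, ?_⟩
  have : D k = (D k - (1 - S k)) + (1 - S k) := by abel
  rw [this]
  exact h1.add (hSdiff k)
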